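/- An n×n quaternionic matrix P is the Gramian Vᴴ·V of some V ∈ ℍ^{d×n} satisfying V·Vᴴ = I_d (i.e., of a normalised tight frame of n vectors for ℍ^d) if and only if P is an orthogonal projection matrix of rank d, i.e., Pᴴ = P, P² = P, and Re(trace(P)) = d. -/

import Mathlib

open Quaternion Matrix BigOperators

private lemma quat_coe_sum {α : Type*} (s : Finset α) (f : α → ℝ) :
    ((∑ x ∈ s, f x : ℝ) : ℍ[ℝ]) = ∑ x ∈ s, ((f x : ℝ) : ℍ[ℝ]) := by
  induction s using Finset.cons_induction with
  | empty => simp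
  | cons a s ha ih => rw [Finset.sum_cons, Finset.sum_cons, Quaternion.coe_add, ih]

private lemma quat_re_sum {α : Type*} (s : Finset α) (f : α → ℍ[ℝ]) :
    (∑ x ∈ s, f x).re = ∑ x ∈ s, (f x).re :=
  map_sum (QuaternionAlgebra.reₗ (R := ℝ) (-1) 0 (-1)) f s

/-- For a Hermitian idempotent, the diagonal entries are (real) sums of norm squares. -/
private lemma diag_eq_normSq {n : ℕ} (P : Matrix (Fin n) (Fin n) ℍ[ℝ])
    (hH : Pᴴ = P) (hP2 : P * P = P) (j : Fin n) :
    P j j = (((∑ k, normSq (P j k)) : ℝ) : ℍ[ℝ]) := by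
  have hherm : ∀ a b, star (P b a) = P a b := by
    intro a b
    rw [← Matrix.conjTranspose_apply, hH]
  have h := congrFun (congrFun hP2 j) j
  rw [Matrix.mul_apply] at h
  rw [← h]
  rw [quat_coe_sum]
  refine Finset.sum_congr rfl fun k _ => ?_
  rw [show P k j = star (P j k) from (hherm k j).symm, Quaternion.self_mul_star]

private lemma trace_re_eq {n : ℕ} (P : Matrix (Fin n) (Fin n) ℍ[ℝ])
    (hH : Pᴴ = P) (hP2 : P * P = P) :
    (P.trace).re = ∑ j, ∑ k, normSq (P j k) := by
  rw [Matrix.trace, quat_re_sum]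
  refine Finset.sum_congr rfl fun j _ => ?_
  rw [Matrix.diag_apply, diag_eq_normSq P hH hP2 j, Quaternion.re_coe]

/-- The key existence lemma, proved by induction on the rank `d`. -/
private lemma exists_frame : ∀ (d : ℕ) {n : ℕ} (P : Matrix (Fin n) (Fin n) ℍ[ℝ]),
    Pᴴ = P → P * P = P → (P.trace).re = d →
    ∃ V : Matrix (Fin d) (Fin n) ℍ[ℝ], V * Vᴴ = 1 ∧ P = Vᴴ * V := by
  intro d
  induction d with
  | zero =>
    intro n P hH hP2 htr
    have h0 : ∑ j, ∑ k, normSq (P j k) = 0 := by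
      rw [← trace_re_eq P hH hP2, htr]; norm_num
    have hP0 : P = 0 := by
      refine Matrix.ext fun j k => ?_
      have h1 := (Finset.sum_eq_zero_iff_of_nonneg (fun j _ =>
        Finset.sum_nonneg fun k _ => normSq_nonneg)).mp h0 j (Finset.mem_univ j)
      have h2 := (Finset.sum_eq_zero_iff_of_nonneg (fun k _ =>
        normSq_nonneg)).mp h1 k (Finset.mem_univ k)
      simpa [normSq_eq_zero] using h2
    refine ⟨0, ?_, ?_⟩
    · exact Matrix.ext fun i j => i.elim0
    · rw [hP0]; refine Matrix.ext fun j k => ?_; simp [Matrix.mul_apply]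
  | succ d ih =>
    intro n P hH hP2 htr
    have hherm : ∀ a b, star (P b a) = P a b := by
      intro a b
      rw [← Matrix.conjTranspose_apply, hH]
    -- find a diagonal entry with positive real part
    obtain ⟨j0, hj0⟩ : ∃ j0, 0 < (P j0 j0).re := by
      by_contra hcon
      push_neg at hcon
      have : (P.trace).re ≤ 0 := by
        rw [Matrix.trace, quat_re_sum]
        exact Finset.sum_nonpos fun j _ => hcon j
      rw [htr] at this
      have : (0:ℝ) < (d+1 : ℕ) := by positivity
      linarith
    set t : ℝ := (P j0 j0).re with ht_def
    have hPjj : P j0 j0 = (t : ℍ[ℝ]) := by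
      rw [diag_eq_normSq P hH hP2 j0, ht_def, diag_eq_normSq P hH hP2 j0, Quaternion.re_coe]
    set s : ℝ := (Real.sqrt t)⁻¹ with hs_def
    have hst : s * s * t = 1 := by
      rw [hs_def, ← mul_inv, Real.mul_self_sqrt hj0.le]
      exact inv_mul_cancel₀ hj0.ne'
    -- the unit vector in the range of P
    set v : Fin n → ℍ[ℝ] := fun j => s • P j j0 with hv_def
    have hvstar : ∀ j, star (v j) = s • P j0 j := by
      intro j
      rw [hv_def]
      rw [Quaternion.star_smul, hherm]
    -- (a) v is a unit vector
    have ha : ∑ k, star (v k) * v k = 1 := by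
      have : ∀ k, star (v k) * v k = (s * s) • (P j0 k * P k j0) := by
        intro k
        rw [hvstar k, hv_def]
        rw [smul_mul_assoc, mul_smul_comm, smul_smul]
      simp_rw [this]
      rw [← Finset.smul_sum]
      have hsum : ∑ k, P j0 k * P k j0 = P j0 j0 := by
        rw [← Matrix.mul_apply, hP2]
      rw [hsum, hPjj, Quaternion.smul_coe, hst, Quaternion.coe_one]
    -- (b) P fixes v
    have hb : ∀ i, ∑ k, P i k * v k = v i := by
      intro i
      simp only [hv_def, mul_smul_comm]
      rw [← Finset.smul_sum, ← Matrix.mul_apply, hP2]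
    -- (c) the star version
    have hc : ∀ i, ∑ k, star (v k) * P k i = star (v i) := by
      intro i
      simp only [hvstar, smul_mul_assoc]
      rw [← Finset.smul_sum, ← Matrix.mul_apply, hP2]
    -- the deflated projection
    set Q : Matrix (Fin n) (Fin n) ℍ[ℝ] :=
      Matrix.of (fun i j => P i j - v i * star (v j)) with hQ_def
    have hQapp : ∀ i j, Q i j = P i j - v i * star (v j) := fun i j => rfl
    have hQH : Qᴴ = Q := by
      refine Matrix.ext fun i j => ?_
      rw [Matrix.conjTranspose_apply, hQapp, hQapp, star_sub, hherm, StarMul.star_mul, star_star]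
    have hQ2 : Q * Q = Q := by
      refine Matrix.ext fun i j => ?_
      rw [Matrix.mul_apply]
      have expand : ∀ k, Q i k * Q k j =
          P i k * P k j - (P i k * v k) * star (v j) - v i * (star (v k) * P k j)
            + v i * ((star (v k) * v k) * star (v j)) := by
        intro k
        rw [hQapp, hQapp]
        noncomm_ring
      simp_rw [expand]
      rw [Finset.sum_add_distrib, Finset.sum_sub_distrib, Finset.sum_sub_distrib,
        ← Finset.sum_mul, ← Finset.mul_sum, ← Finset.mul_sum, ← Finset.sum_mul,
        ← Matrix.mul_apply, hP2, hb, hc, ha, hQapp, one_mul]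
      abel
    have hQtr : (Q.trace).re = d := by
      have h1 : Q.trace = P.trace - ∑ j, v j * star (v j) := by
        rw [Matrix.trace, Matrix.trace, ← Finset.sum_sub_distrib]
        exact Finset.sum_congr rfl fun j _ => rfl
      have h2 : ∑ j, v j * star (v j) = 1 := by
        rw [← ha]
        exact Finset.sum_congr rfl fun j _ => by
          rw [Quaternion.self_mul_star, Quaternion.star_mul_self]
      rw [h1, h2]
      have : (P.trace - 1).re = (P.trace).re - 1 := by simp
      rw [this, htr]
      push_cast
      ring
    obtain ⟨W, hW1, hW2⟩ := ih Q hQH hQ2 hQtr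
    -- W annihilates v
    set w : Fin d → ℍ[ℝ] := W.mulVec v with hw_def
    have hQv : Q.mulVec v = 0 := by
      funext j
      show ∑ k, Q j k * v k = 0
      simp_rw [hQapp, sub_mul, mul_assoc]
      rw [Finset.sum_sub_distrib, ← Finset.mul_sum, hb, ha, mul_one, sub_self]
    have hwv : ∀ i, w i = 0 := by
      have hdot : star w ⬝ᵥ w = 0 := by
        rw [hw_def, Matrix.star_mulVec, Matrix.dotProduct_mulVec, Matrix.vecMul_vecMul,
          ← hW2, ← Matrix.dotProduct_mulVec, hQv, dotProduct_zero]
      have hnorm : ∑ i, normSq (w i) = 0 := by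
        have h1 : star w ⬝ᵥ w = ∑ i, ((normSq (w i) : ℝ) : ℍ[ℝ]) := by
          rw [dotProduct]
          exact Finset.sum_congr rfl fun i _ => by rw [Pi.star_apply, Quaternion.star_mul_self]
        have h2 : (∑ i, ((normSq (w i) : ℝ) : ℍ[ℝ])) = 0 := by rw [← h1, hdot]
        have h3 := congrArg QuaternionAlgebra.re h2
        rw [quat_re_sum] at h3
        simpa using h3
      intro i
      exact normSq_eq_zero.mp ((Finset.sum_eq_zero_iff_of_nonneg
        (fun i _ => normSq_nonneg)).mp hnorm i (Finset.mem_univ i))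
    -- assemble V by stacking star v on top of W
    set V : Matrix (Fin (d+1)) (Fin n) ℍ[ℝ] :=
      Matrix.of (fun i j => Fin.cases (star (v j)) (fun i' => W i' j) i) with hV_def
    have hV0 : ∀ j, V 0 j = star (v j) := fun j => rfl
    have hVs : ∀ i j, V i.succ j = W i j := fun i j => rfl
    refine ⟨V, ?_, ?_⟩
    · refine Matrix.ext fun i i' => ?_
      rw [Matrix.mul_apply]
      simp only [Matrix.conjTranspose_apply]
      rcases Fin.eq_zero_or_eq_succ i with rfl | ⟨i1, rfl⟩ <;>
        rcases Fin.eq_zero_or_eq_succ i' with rfl | ⟨i2, rfl⟩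
      · simp_rw [hV0, star_star]
        rw [ha, Matrix.one_apply_eq]
      · simp_rw [hV0, hVs]
        have : ∑ j, star (v j) * star (W i2 j) = star (∑ j, W i2 j * v j) := by
          rw [star_sum]
          exact Finset.sum_congr rfl fun j _ => (StarMul.star_mul _ _).symm
        rw [this]
        have hwi : ∑ j, W i2 j * v j = w i2 := rfl
        rw [hwi, hwv i2, star_zero, Matrix.one_apply_ne (Fin.succ_ne_zero i2).symm]
      · -- row succ, column 0
        simp_rw [hVs, hV0, star_star]
        have hwi : ∑ j, W i1 j * v j = w i1 := rfl
        rw [hwi, hwv i1, Matrix.one_apply_ne (Fin.succ_ne_zero i1)]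
      · simp_rw [hVs]
        have : ∑ j, W i1 j * star (W i2 j) = (W * Wᴴ) i1 i2 := by
          rw [Matrix.mul_apply]
          exact Finset.sum_congr rfl fun j _ => by rw [Matrix.conjTranspose_apply]
        rw [this, hW1]
        by_cases h : i1 = i2
        · subst h; rw [Matrix.one_apply_eq, Matrix.one_apply_eq]
        · rw [Matrix.one_apply_ne h, Matrix.one_apply_ne (fun hc => h (Fin.succ_injective _ hc))]
    · refine Matrix.ext fun j k => ?_
      rw [Matrix.mul_apply]
      simp only [Matrix.conjTranspose_apply]
      rw [Fin.sum_univ_succ]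
      simp_rw [hV0, hVs, star_star]
      have : ∑ i : Fin d, star (W i j) * W i k = (Wᴴ * W) j k := by
        rw [Matrix.mul_apply]
        exact Finset.sum_congr rfl fun i _ => by rw [Matrix.conjTranspose_apply]
      rw [this, ← hW2, hQapp]
      abel

theorem gramian_iff_orthogonal_projection (d n : ℕ) (P : Matrix (Fin n) (Fin n) ℍ[ℝ]) :
    (∃ V : Matrix (Fin d) (Fin n) ℍ[ℝ], V * Vᴴ = 1 ∧ P = Vᴴ * V) ↔
      (Pᴴ = P ∧ P * P = P ∧ (P.trace).re = d) := by
  constructor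
  · rintro ⟨V, hV1, rfl⟩
    refine ⟨by simp [Matrix.conjTranspose_mul], ?_, ?_⟩
    · rw [Matrix.mul_assoc, ← Matrix.mul_assoc V, hV1, Matrix.one_mul]
    · have h1 : (Vᴴ * V).trace = (V * Vᴴ).trace := by
        rw [Matrix.trace, Matrix.trace]
        simp only [Matrix.diag_apply, Matrix.mul_apply, Matrix.conjTranspose_apply]
        rw [Finset.sum_comm]
        refine Finset.sum_congr rfl fun i _ => Finset.sum_congr rfl fun j _ => ?_
        rw [Quaternion.star_mul_self, Quaternion.self_mul_star]
      rw [h1, hV1, Matrix.trace_one]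
      simp
  · rintro ⟨hH, hP2, htr⟩
    exact exists_frame d P hH hP2 htr
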